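/- For X ≥ 1/5, Y ∈ ℝ with sin(2πY) ≠ 0, and any positive integer k, |Σ_{n≥1} n e^{−π(n²−1)X} sin(2nkπY)| ≤ k · (1 + μ(X))/(1 − μ(X)) · |Σ_{n≥1} n e^{−π(n²−1)X} sin(2nπY)|, where μ(X) = Σ_{n≥2} n² e^{−π(n²−1)X}; in particular 1 − μ(X) > 0 for X ≥ 1/5. -/

import Mathlib

open Real

private lemma exp_lower16 (x : ℝ) (hx : 0 ≤ x) : (1 + x/16)^16 ≤ Real.exp x := by
  have h := Real.add_one_le_exp (x/16)
  calc (1 + x/16)^16 ≤ (Real.exp (x/16))^16 := by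
        apply pow_le_pow_left₀ (by positivity) (by linarith)
    _ = Real.exp x := by
        rw [← Real.exp_nat_mul]; congr 1; push_cast; ring

private lemma sq_le_geom : ∀ n : ℕ, ((n:ℝ)+3)^2 ≤ 9 * 2^n := by
  intro n
  induction n with
  | zero => norm_num
  | succ m ih =>
      push_cast
      push_cast at ih
      have h2 : (0:ℝ) < 2^m := by positivity
      have hp : (2:ℝ)^(m+1) = 2 * 2^m := by ring
      rw [hp]
      nlinarith [sq_nonneg ((m:ℝ)), (Nat.cast_nonneg m : (0:ℝ) ≤ m)]

private lemma abs_sin_nat_mul (θ : ℝ) : ∀ n : ℕ, |Real.sin (n * θ)| ≤ n * |Real.sin θ| := by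
  intro n
  induction n with
  | zero => simp
  | succ m ih =>
      have harg : ((m+1:ℕ):ℝ) * θ = (m:ℝ) * θ + θ := by push_cast; ring
      rw [harg, Real.sin_add]
      have hA : |Real.sin ((m:ℝ)*θ) * Real.cos θ| ≤ |Real.sin ((m:ℝ)*θ)| := by
        rw [abs_mul]
        exact mul_le_of_le_one_right (abs_nonneg _) (Real.abs_cos_le_one _)
      have hB : |Real.cos ((m:ℝ)*θ) * Real.sin θ| ≤ |Real.sin θ| := by
        rw [abs_mul]
        exact mul_le_of_le_one_left (abs_nonneg _) (Real.abs_cos_le_one _)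
      have habs := abs_add_le (Real.sin ((m:ℝ)*θ) * Real.cos θ) (Real.cos ((m:ℝ)*θ) * Real.sin θ)
      have hsθ : 0 ≤ |Real.sin θ| := abs_nonneg _
      push_cast
      nlinarith [ih]

private lemma exp_term_le (X : ℝ) (hX : 0 < X) (a : ℝ) (n : ℕ) (h : (n:ℝ) ≤ ((n:ℝ)+a)^2 - 1) :
    Real.exp (-π * (((n:ℝ)+a)^2 - 1) * X) ≤ Real.exp (-π*X) ^ n := by
  rw [← Real.exp_nat_mul]
  apply Real.exp_le_exp.mpr
  have hpx : 0 < π * X := mul_pos Real.pi_pos hX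
  nlinarith [hpx]

private lemma summable_shift1 (X : ℝ) (hX : 0 < X) :
    Summable (fun n : ℕ => ((n:ℝ)+1)^2 * Real.exp (-π * (((n:ℝ)+1)^2 - 1) * X)) := by
  set r := Real.exp (-π*X) with hr
  have hr0 : 0 < r := Real.exp_pos _
  have hr1 : r < 1 := by
    rw [hr, Real.exp_lt_one_iff]
    nlinarith [mul_pos Real.pi_pos hX]
  have hnorm : ‖r‖ < 1 := by rwa [Real.norm_eq_abs, abs_of_pos hr0]
  have h2 := summable_pow_mul_geometric_of_norm_lt_one 2 hnorm
  have h1 := summable_pow_mul_geometric_of_norm_lt_one 1 hnorm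
  have h0 : Summable (fun n : ℕ => r^n) := summable_geometric_of_lt_one hr0.le hr1
  have hg : Summable (fun n : ℕ => ((n:ℝ)+1)^2 * r^n) := by
    apply ((h2.add (h1.mul_left 2)).add h0).congr
    intro n; push_cast; ring
  apply hg.of_nonneg_of_le (fun n => by positivity)
  intro n
  apply mul_le_mul_of_nonneg_left _ (by positivity)
  exact exp_term_le X hX 1 n (by nlinarith [(Nat.cast_nonneg n : (0:ℝ) ≤ n)])

private lemma summable_shift2 (X : ℝ) (hX : 0 < X) :
    Summable (fun n : ℕ => ((n:ℝ)+2)^2 * Real.exp (-π * (((n:ℝ)+2)^2 - 1) * X)) := by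
  set r := Real.exp (-π*X) with hr
  have hr0 : 0 < r := Real.exp_pos _
  have hr1 : r < 1 := by
    rw [hr, Real.exp_lt_one_iff]
    nlinarith [mul_pos Real.pi_pos hX]
  have hnorm : ‖r‖ < 1 := by rwa [Real.norm_eq_abs, abs_of_pos hr0]
  have h2 := summable_pow_mul_geometric_of_norm_lt_one 2 hnorm
  have h1 := summable_pow_mul_geometric_of_norm_lt_one 1 hnorm
  have h0 : Summable (fun n : ℕ => r^n) := summable_geometric_of_lt_one hr0.le hr1
  have hg : Summable (fun n : ℕ => ((n:ℝ)+2)^2 * r^n) := by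
    apply ((h2.add (h1.mul_left 4)).add (h0.mul_left 4)).congr
    intro n; push_cast; ring
  apply hg.of_nonneg_of_le (fun n => by positivity)
  intro n
  apply mul_le_mul_of_nonneg_left _ (by positivity)
  exact exp_term_le X hX 2 n (by nlinarith [(Nat.cast_nonneg n : (0:ℝ) ≤ n)])

private lemma exp_35_le (X : ℝ) (hX : 1/5 ≤ X) : Real.exp (-π * 3 * X) ≤ 17/100 := by
  have hpi := Real.pi_gt_d6
  have h1 : Real.exp (-π * 3 * X) ≤ Real.exp (-(3*π/5)) := by
    apply Real.exp_le_exp.mpr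
    nlinarith [Real.pi_pos]
  refine h1.trans ?_
  rw [Real.exp_neg, inv_le_comm₀ (Real.exp_pos _) (by norm_num)]
  calc (17/100 : ℝ)⁻¹ ≤ (1.11775:ℝ)^16 := by norm_num
    _ ≤ (1 + (3*π/5)/16)^16 := by
        apply pow_le_pow_left₀ (by norm_num)
        nlinarith
    _ ≤ Real.exp (3*π/5) := exp_lower16 _ (by positivity)

private lemma exp_45_le : Real.exp (-(4*π/5)) ≤ 1/10 := by
  have hpi := Real.pi_gt_d6
  rw [Real.exp_neg, inv_le_comm₀ (Real.exp_pos _) (by norm_num)]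
  calc (1/10 : ℝ)⁻¹ ≤ (1.157:ℝ)^16 := by norm_num
    _ ≤ (1 + (4*π/5)/16)^16 := by
        apply pow_le_pow_left₀ (by norm_num)
        nlinarith
    _ ≤ Real.exp (4*π/5) := exp_lower16 _ (by positivity)

private lemma mu_le (X : ℝ) (hX : 1/5 ≤ X) :
    (∑' n : ℕ, ((n:ℝ)+2)^2 * Real.exp (-π * (((n:ℝ)+2)^2 - 1) * X)) ≤ 4/5 := by
  have hX0 : (0:ℝ) < X := by linarith
  have hsum := summable_shift2 X hX0
  rw [Summable.tsum_eq_zero_add hsum]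
  have h0 : (((0:ℕ):ℝ)+2)^2 * Real.exp (-π * ((((0:ℕ):ℝ)+2)^2 - 1) * X) ≤ 68/100 := by
    have e1 : (-π * ((((0:ℕ):ℝ)+2)^2 - 1) * X) = -π * 3 * X := by norm_num
    rw [e1]
    have h := exp_35_le X hX
    push_cast
    nlinarith [h, Real.exp_pos (-π * 3 * X)]
  have htail : (∑' n : ℕ, ((((n+1:ℕ)):ℝ)+2)^2 *
      Real.exp (-π * (((((n+1:ℕ)):ℝ)+2)^2 - 1) * X)) ≤ 9/80 := by
    have hterm : ∀ n : ℕ, ((((n+1:ℕ)):ℝ)+2)^2 *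
        Real.exp (-π * (((((n+1:ℕ)):ℝ)+2)^2 - 1) * X) ≤ (9/100) * (1/5)^n := by
      intro n
      have hc : ((((n+1:ℕ)):ℝ)+2) = (n:ℝ)+3 := by push_cast; ring
      rw [hc]
      have hexp : Real.exp (-π * (((n:ℝ)+3)^2 - 1) * X) ≤ (1/10)^(n+2) := by
        have step1 : Real.exp (-π * (((n:ℝ)+3)^2 - 1) * X)
            ≤ Real.exp (-(4*π/5)) ^ (n+2) := by
          rw [← Real.exp_nat_mul]
          apply Real.exp_le_exp.mpr
          have hpi := Real.pi_pos
          have hn : (0:ℝ) ≤ n := Nat.cast_nonneg n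
          push_cast
          nlinarith [mul_nonneg hpi.le hn, mul_nonneg (mul_nonneg hpi.le hn) hn,
            mul_nonneg hpi.le (mul_nonneg hn hn)]
        refine step1.trans ?_
        exact pow_le_pow_left₀ (Real.exp_pos _).le exp_45_le (n+2)
      calc ((n:ℝ)+3)^2 * Real.exp (-π * (((n:ℝ)+3)^2 - 1) * X)
          ≤ (9 * 2^n) * (1/10)^(n+2) := by
            apply mul_le_mul (sq_le_geom n) hexp (Real.exp_pos _).le (by positivity)
        _ = (9/100) * ((2:ℝ)*(1/10))^n := by rw [mul_pow, pow_add]; ring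
        _ = (9/100) * (1/5)^n := by norm_num
    have hgs : Summable (fun n : ℕ => (9/100 : ℝ) * (1/5)^n) :=
      (summable_geometric_of_lt_one (by norm_num) (by norm_num)).mul_left _
    have := Summable.tsum_le_tsum hterm ((summable_nat_add_iff 1).mpr hsum) hgs
    refine this.trans ?_
    rw [tsum_mul_left, tsum_geometric_of_lt_one (by norm_num) (by norm_num)]
    norm_num
  linarith

private lemma summable_sin_series (X : ℝ) (hX : 0 < X) (g : ℕ → ℝ) :
    Summable (fun n : ℕ => ((n:ℝ)+1) * Real.exp (-π * (((n:ℝ)+1)^2 - 1) * X) *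
      Real.sin (g n)) := by
  apply Summable.of_norm_bounded (summable_shift1 X hX)
  intro n
  rw [Real.norm_eq_abs, abs_mul, abs_mul,
    abs_of_nonneg (by positivity : (0:ℝ) ≤ (n:ℝ)+1),
    abs_of_nonneg (Real.exp_pos _).le]
  have h3 : |Real.sin (g n)| ≤ 1 := Real.abs_sin_le_one _
  have he := Real.exp_pos (-π * (((n:ℝ)+1)^2 - 1) * X)
  have hn : (0:ℝ) ≤ (n:ℝ) := Nat.cast_nonneg n
  calc ((n:ℝ)+1) * Real.exp (-π * (((n:ℝ)+1)^2 - 1) * X) * |Real.sin (g n)|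
      ≤ ((n:ℝ)+1) * Real.exp (-π * (((n:ℝ)+1)^2 - 1) * X) * 1 := by
        apply mul_le_mul_of_nonneg_left h3 (by positivity)
    _ ≤ ((n:ℝ)+1)^2 * Real.exp (-π * (((n:ℝ)+1)^2 - 1) * X) := by
        rw [mul_one]
        nlinarith [mul_nonneg (mul_nonneg hn (by linarith : (0:ℝ) ≤ (n:ℝ)+1)) he.le]

theorem thetaY_quotient_bound (X Y : ℝ) (hX : 1/5 ≤ X) (hY : Real.sin (2 * π * Y) ≠ 0)
    (k : ℕ) (hk : 1 ≤ k) :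
    (1 - ∑' n : ℕ, ((n : ℝ) + 2)^2 * Real.exp (-π * (((n : ℝ) + 2)^2 - 1) * X)) > 0 ∧
    |∑' n : ℕ, ((n : ℝ) + 1) * Real.exp (-π * (((n : ℝ) + 1)^2 - 1) * X) *
        Real.sin (2 * ((n : ℝ) + 1) * (k : ℝ) * π * Y)|
      ≤ (k : ℝ) *
        ((1 + ∑' n : ℕ, ((n : ℝ) + 2)^2 * Real.exp (-π * (((n : ℝ) + 2)^2 - 1) * X)) /
         (1 - ∑' n : ℕ, ((n : ℝ) + 2)^2 * Real.exp (-π * (((n : ℝ) + 2)^2 - 1) * X))) *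
        |∑' n : ℕ, ((n : ℝ) + 1) * Real.exp (-π * (((n : ℝ) + 1)^2 - 1) * X) *
            Real.sin (2 * ((n : ℝ) + 1) * π * Y)| := by
  have hX0 : (0:ℝ) < X := by linarith
  set μ := ∑' n : ℕ, ((n:ℝ)+2)^2 * Real.exp (-π * (((n:ℝ)+2)^2 - 1) * X) with hμdef
  have hμ0 : 0 ≤ μ := tsum_nonneg (fun n => by positivity)
  have hμle : μ ≤ 4/5 := mu_le X hX
  have h1μ : (0:ℝ) < 1 - μ := by linarith
  refine ⟨h1μ, ?_⟩
  set s := Real.sin (2 * π * Y) with hsdef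
  -- summabilities
  have hSk : Summable (fun n : ℕ => ((n:ℝ)+1) * Real.exp (-π * (((n:ℝ)+1)^2 - 1) * X) *
      Real.sin (2 * ((n:ℝ)+1) * (k:ℝ) * π * Y)) :=
    summable_sin_series X hX0 _
  have hS1 : Summable (fun n : ℕ => ((n:ℝ)+1) * Real.exp (-π * (((n:ℝ)+1)^2 - 1) * X) *
      Real.sin (2 * ((n:ℝ)+1) * π * Y)) :=
    summable_sin_series X hX0 _
  have hE1 := summable_shift1 X hX0
  have hE2 := summable_shift2 X hX0
  -- the sum of (n+1)^2 E equals 1 + μ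
  have hsum1 : (∑' n : ℕ, ((n:ℝ)+1)^2 * Real.exp (-π * (((n:ℝ)+1)^2 - 1) * X)) = 1 + μ := by
    rw [Summable.tsum_eq_zero_add hE1]
    have h0 : (((0:ℕ):ℝ)+1)^2 * Real.exp (-π * ((((0:ℕ):ℝ)+1)^2 - 1) * X) = 1 := by
      norm_num
    rw [h0]
    congr 1
    apply tsum_congr
    intro n
    push_cast
    ring_nf
  -- upper bound for the k-series
  have hup : |∑' n : ℕ, ((n:ℝ)+1) * Real.exp (-π * (((n:ℝ)+1)^2 - 1) * X) *
      Real.sin (2 * ((n:ℝ)+1) * (k:ℝ) * π * Y)| ≤ (k:ℝ) * (1+μ) * |s| := by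
    have h1 : |∑' n : ℕ, ((n:ℝ)+1) * Real.exp (-π * (((n:ℝ)+1)^2 - 1) * X) *
        Real.sin (2 * ((n:ℝ)+1) * (k:ℝ) * π * Y)|
        ≤ ∑' n : ℕ, |((n:ℝ)+1) * Real.exp (-π * (((n:ℝ)+1)^2 - 1) * X) *
        Real.sin (2 * ((n:ℝ)+1) * (k:ℝ) * π * Y)| := by
      have := norm_tsum_le_tsum_norm (f := fun n : ℕ => ((n:ℝ)+1) *
        Real.exp (-π * (((n:ℝ)+1)^2 - 1) * X) *
        Real.sin (2 * ((n:ℝ)+1) * (k:ℝ) * π * Y)) (by simpa only [Real.norm_eq_abs] using hSk.abs)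
      simpa only [Real.norm_eq_abs] using this
    refine h1.trans ?_
    have h2 : ∀ n : ℕ, |((n:ℝ)+1) * Real.exp (-π * (((n:ℝ)+1)^2 - 1) * X) *
        Real.sin (2 * ((n:ℝ)+1) * (k:ℝ) * π * Y)|
        ≤ ((n:ℝ)+1)^2 * Real.exp (-π * (((n:ℝ)+1)^2 - 1) * X) * ((k:ℝ) * |s|) := by
      intro n
      rw [abs_mul, abs_mul, abs_of_nonneg (by positivity : (0:ℝ) ≤ (n:ℝ)+1),
        abs_of_nonneg (Real.exp_pos _).le]
      have harg : 2 * ((n:ℝ)+1) * (k:ℝ) * π * Y = (((n+1)*k : ℕ) : ℝ) * (2 * π * Y) := by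
        push_cast; ring
      have hsin : |Real.sin (2 * ((n:ℝ)+1) * (k:ℝ) * π * Y)| ≤ (((n+1)*k : ℕ) : ℝ) * |s| := by
        rw [harg, hsdef]
        exact abs_sin_nat_mul _ _
      have he := (Real.exp_pos (-π * (((n:ℝ)+1)^2 - 1) * X)).le
      have hn : (0:ℝ) ≤ (n:ℝ) := Nat.cast_nonneg n
      have hcast : (((n+1)*k : ℕ) : ℝ) = ((n:ℝ)+1) * (k:ℝ) := by push_cast; ring
      rw [hcast] at hsin
      calc ((n:ℝ)+1) * Real.exp (-π * (((n:ℝ)+1)^2 - 1) * X) *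
            |Real.sin (2 * ((n:ℝ)+1) * (k:ℝ) * π * Y)|
          ≤ ((n:ℝ)+1) * Real.exp (-π * (((n:ℝ)+1)^2 - 1) * X) * (((n:ℝ)+1) * (k:ℝ) * |s|) := by
            apply mul_le_mul_of_nonneg_left hsin (by positivity)
        _ = ((n:ℝ)+1)^2 * Real.exp (-π * (((n:ℝ)+1)^2 - 1) * X) * ((k:ℝ) * |s|) := by ring
    have h3 := Summable.tsum_le_tsum h2 (by simpa only [Real.norm_eq_abs] using hSk.abs)
      (hE1.mul_right ((k:ℝ) * |s|))
    refine h3.trans ?_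
    rw [tsum_mul_right, hsum1]
    ring_nf
    exact le_refl _
  -- lower bound for the 1-series
  have hlow : (1 - μ) * |s| ≤ |∑' n : ℕ, ((n:ℝ)+1) * Real.exp (-π * (((n:ℝ)+1)^2 - 1) * X) *
      Real.sin (2 * ((n:ℝ)+1) * π * Y)| := by
    rw [Summable.tsum_eq_zero_add hS1]
    have hf0 : (((0:ℕ):ℝ)+1) * Real.exp (-π * ((((0:ℕ):ℝ)+1)^2 - 1) * X) *
        Real.sin (2 * (((0:ℕ):ℝ)+1) * π * Y) = s := by
      rw [hsdef]
      norm_num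
    rw [hf0]
    -- bound the tail
    have htail : |∑' n : ℕ, (((n+1:ℕ):ℝ)+1) * Real.exp (-π * ((((n+1:ℕ):ℝ)+1)^2 - 1) * X) *
        Real.sin (2 * (((n+1:ℕ):ℝ)+1) * π * Y)| ≤ μ * |s| := by
      have hs1shift : Summable (fun n : ℕ => |(((n+1:ℕ):ℝ)+1) *
          Real.exp (-π * ((((n+1:ℕ):ℝ)+1)^2 - 1) * X) *
          Real.sin (2 * (((n+1:ℕ):ℝ)+1) * π * Y)|) := by
        simpa only [Real.norm_eq_abs] using (((summable_nat_add_iff 1).mpr hS1).abs)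
      have h1 : |∑' n : ℕ, (((n+1:ℕ):ℝ)+1) * Real.exp (-π * ((((n+1:ℕ):ℝ)+1)^2 - 1) * X) *
          Real.sin (2 * (((n+1:ℕ):ℝ)+1) * π * Y)|
          ≤ ∑' n : ℕ, |(((n+1:ℕ):ℝ)+1) * Real.exp (-π * ((((n+1:ℕ):ℝ)+1)^2 - 1) * X) *
          Real.sin (2 * (((n+1:ℕ):ℝ)+1) * π * Y)| := by
        have := norm_tsum_le_tsum_norm (f := fun n : ℕ => (((n+1:ℕ):ℝ)+1) *
          Real.exp (-π * ((((n+1:ℕ):ℝ)+1)^2 - 1) * X) *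
          Real.sin (2 * (((n+1:ℕ):ℝ)+1) * π * Y)) (by simpa only [Real.norm_eq_abs] using hs1shift)
        simpa only [Real.norm_eq_abs] using this
      refine h1.trans ?_
      have h2 : ∀ n : ℕ, |(((n+1:ℕ):ℝ)+1) * Real.exp (-π * ((((n+1:ℕ):ℝ)+1)^2 - 1) * X) *
          Real.sin (2 * (((n+1:ℕ):ℝ)+1) * π * Y)|
          ≤ ((n:ℝ)+2)^2 * Real.exp (-π * (((n:ℝ)+2)^2 - 1) * X) * |s| := by
        intro n
        have hc : (((n+1:ℕ):ℝ)+1) = (n:ℝ)+2 := by push_cast; ring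
        rw [hc, abs_mul, abs_mul, abs_of_nonneg (by positivity : (0:ℝ) ≤ (n:ℝ)+2),
          abs_of_nonneg (Real.exp_pos _).le]
        have harg : 2 * ((n:ℝ)+2) * π * Y = (((n+2 : ℕ)) : ℝ) * (2 * π * Y) := by
          push_cast; ring
        have hsin : |Real.sin (2 * ((n:ℝ)+2) * π * Y)| ≤ ((n:ℝ)+2) * |s| := by
          rw [harg, hsdef]
          have := abs_sin_nat_mul (2*π*Y) (n+2)
          push_cast at this ⊢
          linarith
        calc ((n:ℝ)+2) * Real.exp (-π * (((n:ℝ)+2)^2 - 1) * X) *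
              |Real.sin (2 * ((n:ℝ)+2) * π * Y)|
            ≤ ((n:ℝ)+2) * Real.exp (-π * (((n:ℝ)+2)^2 - 1) * X) * (((n:ℝ)+2) * |s|) := by
              apply mul_le_mul_of_nonneg_left hsin (by positivity)
          _ = ((n:ℝ)+2)^2 * Real.exp (-π * (((n:ℝ)+2)^2 - 1) * X) * |s| := by ring
      have h3 := Summable.tsum_le_tsum h2 hs1shift (hE2.mul_right |s|)
      refine h3.trans ?_
      rw [tsum_mul_right, hμdef]
    have habs := abs_add_le (s + ∑' n : ℕ, (((n+1:ℕ):ℝ)+1) *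
        Real.exp (-π * ((((n+1:ℕ):ℝ)+1)^2 - 1) * X) *
        Real.sin (2 * (((n+1:ℕ):ℝ)+1) * π * Y))
      (-(∑' n : ℕ, (((n+1:ℕ):ℝ)+1) * Real.exp (-π * ((((n+1:ℕ):ℝ)+1)^2 - 1) * X) *
        Real.sin (2 * (((n+1:ℕ):ℝ)+1) * π * Y)))
    simp only [add_neg_cancel_right, abs_neg] at habs
    nlinarith [habs, htail, abs_nonneg s]
  -- combine
  have hk1 : (1:ℝ) ≤ (k:ℝ) := by exact_mod_cast hk
  rw [show (k:ℝ) * ((1 + μ) / (1 - μ)) *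
      |∑' n : ℕ, ((n:ℝ)+1) * Real.exp (-π * (((n:ℝ)+1)^2 - 1) * X) *
        Real.sin (2 * ((n:ℝ)+1) * π * Y)|
      = ((k:ℝ) * (1 + μ) *
      |∑' n : ℕ, ((n:ℝ)+1) * Real.exp (-π * (((n:ℝ)+1)^2 - 1) * X) *
        Real.sin (2 * ((n:ℝ)+1) * π * Y)|) / (1 - μ) by ring,
    le_div_iff₀ h1μ]
  have hA := mul_le_mul_of_nonneg_right hup h1μ.le
  have hB := mul_le_mul_of_nonneg_left hlow
    (by positivity : (0:ℝ) ≤ (k:ℝ) * (1 + μ))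
  nlinarith [hA, hB]
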